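/- Let r ≥ 3, n ∈ ℕ, 0 ≤ δ ≤ 1/(8r), and let G be an r-partite graph on (V_1,...,V_r) with |V_1| = ... = |V_r| = n and minimum cross-degree at least (1−δ)n. For each edge e of G, let z_e be the number of copies of K_r in G containing e. Then for every edge e, |z_e − k/n²| ≤ 9δr·k/n², where k is the total number of copies of K_r in G with one vertex in each part. -/

import Mathlib

open Finset
open scoped Classical
set_option linter.unusedSectionVars false
set_option maxHeartbeats 1600000

section aux
variable {V : Type*} [Fintype V] [DecidableEq V] {r n : ℕ}
variable {G : SimpleGraph V} {P : V → Fin r}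

private lemma part_injOn (hpart : ∀ u v, G.Adj u v → P u ≠ P v) {K : Finset V}
    (hK : G.IsClique (K : Set V)) : Set.InjOn P (K : Set V) := by
  intro a ha b hb hab
  by_contra hne
  exact hpart a b (hK ha hb hne) hab

private lemma exists_rep (hpart : ∀ u v, G.Adj u v → P u ≠ P v) {K : Finset V}
    (hK : G.IsNClique r K) (t : Fin r) : ∃ x ∈ K, P x = t := by
  have hinj : Set.InjOn P (K : Set V) := part_injOn hpart hK.1
  have himg : K.image P = Finset.univ := by
    apply Finset.eq_univ_of_card
    rw [Finset.card_image_of_injOn hinj, hK.2, Fintype.card_fin]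
  have ht : t ∈ K.image P := by rw [himg]; exact Finset.mem_univ t
  simpa using Finset.mem_image.mp ht

private lemma nonnbr_bound (δ : ℝ)
    (hsize : ∀ i : Fin r, (Finset.univ.filter fun v => P v = i).card = n)
    (hdeg : ∀ (j : Fin r) (v : V), P v ≠ j →
      (1 - δ) * n ≤ ((Finset.univ.filter fun u => P u = j ∧ G.Adj v u).card : ℝ))
    (v : V) (t : Fin r) (h : P v ≠ t) :
    ((Finset.univ.filter fun x => P x = t ∧ ¬ G.Adj v x).card : ℝ) ≤ δ * n := by
  have hsplit := Finset.card_filter_add_card_filter_not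
      (s := Finset.univ.filter fun x => P x = t) (p := fun x => G.Adj v x)
  rw [Finset.filter_filter, Finset.filter_filter, hsize t] at hsplit
  have h1 := hdeg t v h
  have h2 : ((Finset.univ.filter fun x => P x = t ∧ G.Adj v x).card : ℝ)
      + ((Finset.univ.filter fun x => P x = t ∧ ¬ G.Adj v x).card : ℝ) = n := by
    exact_mod_cast congrArg (Nat.cast : ℕ → ℝ) hsplit
  nlinarith [h1, h2]

private lemma vertex_bound (hr : 3 ≤ r) (δ : ℝ) (hδ0 : 0 ≤ δ)
    (hpart : ∀ u v, G.Adj u v → P u ≠ P v)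
    (hsize : ∀ i : Fin r, (Finset.univ.filter fun v => P v = i).card = n)
    (hdeg : ∀ (j : Fin r) (v : V), P v ≠ j →
      (1 - δ) * n ≤ ((Finset.univ.filter fun u => P u = j ∧ G.Adj v u).card : ℝ))
    (w : V) :
    (((G.cliqueFinset r).filter fun K => w ∈ K).card : ℝ) * ((1 - r * δ) * n)
      ≤ ((G.cliqueFinset r).card : ℝ) := by
  classical
  set Zw := (G.cliqueFinset r).filter fun K => w ∈ K with hZwdef
  set inn : Finset V → Finset V := fun K' =>
    Finset.univ.filter fun x => P x = P w ∧ ∀ z ∈ K'.erase w, G.Adj x z with hinndef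
  have hmem : ∀ K' ∈ Zw, G.IsNClique r K' ∧ w ∈ K' := by
    intro K' hK'
    rw [hZwdef, Finset.mem_filter, SimpleGraph.mem_cliqueFinset_iff] at hK'
    exact hK'
  -- the image map lands in cliques
  have himg : ∀ p ∈ Zw.sigma inn, (insert p.2 (p.1.erase w)) ∈ G.cliqueFinset r := by
    rintro ⟨K', x⟩ hp
    rw [Finset.mem_sigma] at hp
    obtain ⟨hK', hx⟩ := hp
    obtain ⟨hKcl, hw⟩ := hmem K' hK'
    rw [hinndef, Finset.mem_filter] at hx
    obtain ⟨-, hPx, hadj⟩ := hx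
    have hxE : x ∉ K'.erase w := by
      intro hxe
      have hxK : x ∈ K' := Finset.mem_of_mem_erase hxe
      have : x = w := part_injOn hpart hKcl.1 hxK hw hPx
      exact (Finset.mem_erase.mp hxe).1 this
    have hclE : G.IsClique ((K'.erase w : Finset V) : Set V) :=
      hKcl.1.subset (Finset.coe_subset.mpr (Finset.erase_subset _ _))
    have hcl : G.IsClique ((insert x (K'.erase w) : Finset V) : Set V) := by
      rw [Finset.coe_insert]
      exact hclE.insert fun b hb _ => hadj b hb
    rw [SimpleGraph.mem_cliqueFinset_iff]
    refine ⟨hcl, ?_⟩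
    rw [Finset.card_insert_of_notMem hxE, Finset.card_erase_of_mem hw, hKcl.2]
    omega
  have key : (Zw.sigma inn).card ≤ (G.cliqueFinset r).card := by
    apply Finset.card_le_card_of_injOn (fun p => insert p.2 (p.1.erase w)) (fun p hp => himg p hp)
    rintro ⟨K₁, x₁⟩ h₁ ⟨K₂, x₂⟩ h₂ heq
    simp only [Finset.mem_coe] at h₁ h₂
    have h₁' := h₁; have h₂' := h₂
    rw [Finset.mem_sigma] at h₁' h₂'
    obtain ⟨hK₁, hx₁⟩ := h₁'
    obtain ⟨hK₂, hx₂⟩ := h₂'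
    obtain ⟨hKcl₁, hw₁⟩ := hmem K₁ hK₁
    obtain ⟨hKcl₂, hw₂⟩ := hmem K₂ hK₂
    rw [hinndef, Finset.mem_filter] at hx₁ hx₂
    have hxE₁ : x₁ ∉ K₁.erase w := by
      intro hxe
      have : x₁ = w := part_injOn hpart hKcl₁.1 (Finset.mem_of_mem_erase hxe) hw₁ hx₁.2.1
      exact (Finset.mem_erase.mp hxe).1 this
    have hxE₂ : x₂ ∉ K₂.erase w := by
      intro hxe
      have : x₂ = w := part_injOn hpart hKcl₂.1 (Finset.mem_of_mem_erase hxe) hw₂ hx₂.2.1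
      exact (Finset.mem_erase.mp hxe).1 this
    simp only at heq
    -- the common image clique
    have hKmem := himg ⟨K₁, x₁⟩ h₁
    rw [SimpleGraph.mem_cliqueFinset_iff] at hKmem
    have hx₂K : x₂ ∈ insert x₁ (K₁.erase w) := by rw [heq]; exact Finset.mem_insert_self _ _
    have hx₁K : x₁ ∈ insert x₁ (K₁.erase w) := Finset.mem_insert_self _ _
    have hxx : x₁ = x₂ :=
      part_injOn hpart hKmem.1 hx₁K hx₂K (by rw [hx₁.2.1, hx₂.2.1])
    subst hxx
    have hEe : K₁.erase w = K₂.erase w := by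
      have := congrArg (fun s => Finset.erase s x₁) heq
      simpa [Finset.erase_insert hxE₁, Finset.erase_insert hxE₂] using this
    have hKK : K₁ = K₂ := by
      rw [← Finset.insert_erase hw₁, ← Finset.insert_erase hw₂, hEe]
    subst hKK
    rfl
  rw [Finset.card_sigma] at key
  -- lower bound each fiber
  have hlow : ∀ K' ∈ Zw, (1 - (r : ℝ) * δ) * n ≤ ((inn K').card : ℝ) := by
    intro K' hK'
    obtain ⟨hKcl, hw⟩ := hmem K' hK'
    have hsplit := Finset.card_filter_add_card_filter_not
        (s := Finset.univ.filter fun x => P x = P w)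
        (p := fun x => ∀ z ∈ K'.erase w, G.Adj x z)
    rw [Finset.filter_filter, Finset.filter_filter, hsize (P w)] at hsplit
    have hbad : ((Finset.univ.filter fun x =>
        P x = P w ∧ ¬ ∀ z ∈ K'.erase w, G.Adj x z).card : ℝ) ≤ (r : ℝ) * δ * n := by
      have hsub : (Finset.univ.filter fun x => P x = P w ∧ ¬ ∀ z ∈ K'.erase w, G.Adj x z)
          ⊆ (K'.erase w).biUnion fun z =>
              Finset.univ.filter fun x => P x = P w ∧ ¬ G.Adj z x := by
        intro x hx
        rw [Finset.mem_filter] at hx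
        obtain ⟨-, hPx, hbadx⟩ := hx
        push_neg at hbadx
        obtain ⟨z, hz, hnadj⟩ := hbadx
        rw [Finset.mem_biUnion]
        refine ⟨z, hz, ?_⟩
        rw [Finset.mem_filter]
        exact ⟨Finset.mem_univ x, hPx, fun h => hnadj h.symm⟩
      have h1 : ((Finset.univ.filter fun x =>
          P x = P w ∧ ¬ ∀ z ∈ K'.erase w, G.Adj x z).card : ℝ)
          ≤ ∑ z ∈ K'.erase w,
            ((Finset.univ.filter fun x => P x = P w ∧ ¬ G.Adj z x).card : ℝ) := by
        have := le_trans (Finset.card_le_card hsub) Finset.card_biUnion_le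
        exact_mod_cast this
      have h2 : ∑ z ∈ K'.erase w,
          ((Finset.univ.filter fun x => P x = P w ∧ ¬ G.Adj z x).card : ℝ)
          ≤ ∑ _z ∈ K'.erase w, δ * n := by
        apply Finset.sum_le_sum
        intro z hz
        have hzK : z ∈ K' := Finset.mem_of_mem_erase hz
        have hPz : P z ≠ P w := by
          intro h
          exact (Finset.mem_erase.mp hz).1 (part_injOn hpart hKcl.1 hzK hw h)
        exact nonnbr_bound δ hsize hdeg z (P w) hPz
      have h3 : ∑ _z ∈ K'.erase w, δ * n ≤ (r : ℝ) * δ * n := by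
        rw [Finset.sum_const, Finset.card_erase_of_mem hw, hKcl.2, nsmul_eq_mul]
        have : ((r - 1 : ℕ) : ℝ) ≤ (r : ℝ) := by
          exact_mod_cast Nat.cast_le.mpr (Nat.sub_le r 1)
        nlinarith [mul_nonneg hδ0 (Nat.cast_nonneg (α := ℝ) n)]
      linarith
    have heq : ((inn K').card : ℝ)
        = (n : ℝ) - ((Finset.univ.filter fun x =>
            P x = P w ∧ ¬ ∀ z ∈ K'.erase w, G.Adj x z).card : ℝ) := by
      rw [hinndef]
      have := congrArg (Nat.cast : ℕ → ℝ) hsplit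
      push_cast at this
      linarith
    rw [heq]
    nlinarith [Nat.cast_nonneg (α := ℝ) n]
  -- combine
  have hsum : (Zw.card : ℝ) * ((1 - (r : ℝ) * δ) * n)
      ≤ ∑ K' ∈ Zw, ((inn K').card : ℝ) := by
    calc (Zw.card : ℝ) * ((1 - (r : ℝ) * δ) * n)
        = ∑ _K' ∈ Zw, (1 - (r : ℝ) * δ) * n := by rw [Finset.sum_const, nsmul_eq_mul]
      _ ≤ _ := Finset.sum_le_sum hlow
  have hkey : ∑ K' ∈ Zw, ((inn K').card : ℝ) ≤ ((G.cliqueFinset r).card : ℝ) := by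
    exact_mod_cast key
  linarith

private lemma edge_upper (hr : 3 ≤ r) (δ : ℝ) (hδ0 : 0 ≤ δ)
    (hpart : ∀ u v, G.Adj u v → P u ≠ P v)
    (hsize : ∀ i : Fin r, (Finset.univ.filter fun v => P v = i).card = n)
    (hdeg : ∀ (j : Fin r) (v : V), P v ≠ j →
      (1 - δ) * n ≤ ((Finset.univ.filter fun u => P u = j ∧ G.Adj v u).card : ℝ))
    (u v : V) (huv : G.Adj u v) :
    ((((G.cliqueFinset r).filter fun K => u ∈ K ∧ v ∈ K).card : ℝ))
        * ((1 - 2 * r * δ) * (n : ℝ) ^ 2)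
      ≤ ((G.cliqueFinset r).card : ℝ) := by
  classical
  have hij : P u ≠ P v := hpart u v huv
  have hune : u ≠ v := huv.ne
  set Ze := (G.cliqueFinset r).filter fun K => u ∈ K ∧ v ∈ K with hZedef
  set Vi := Finset.univ.filter fun x => P x = P u with hVidef
  set Vj := Finset.univ.filter fun x => P x = P v with hVjdef
  set prs : Finset V → Finset (V × V) := fun K' =>
    (Vi ×ˢ Vj).filter fun p => G.Adj p.1 p.2 ∧
      ∀ z ∈ (K'.erase u).erase v, G.Adj p.1 z ∧ G.Adj p.2 z with hprsdef
  have hmem : ∀ K' ∈ Ze, G.IsNClique r K' ∧ u ∈ K' ∧ v ∈ K' := by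
    intro K' hK'
    rw [hZedef, Finset.mem_filter, SimpleGraph.mem_cliqueFinset_iff] at hK'
    exact ⟨hK'.1, hK'.2⟩
  have hvKe : ∀ K' : Finset V, v ∈ K' → v ∈ K'.erase u := by
    intro K' hv; exact Finset.mem_erase.mpr ⟨fun h => hune h.symm, hv⟩
  -- facts about F' = erase erase
  have hFcard : ∀ K' ∈ Ze, ((K'.erase u).erase v).card = r - 2 := by
    intro K' hK'
    obtain ⟨hKcl, hu, hv⟩ := hmem K' hK'
    rw [Finset.card_erase_of_mem (hvKe K' hv), Finset.card_erase_of_mem hu, hKcl.2]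
    omega
  have hFpart : ∀ K' ∈ Ze, ∀ z ∈ (K'.erase u).erase v, P z ≠ P u ∧ P z ≠ P v := by
    intro K' hK' z hz
    obtain ⟨hKcl, hu, hv⟩ := hmem K' hK'
    have hzv : z ≠ v := (Finset.mem_erase.mp hz).1
    have hzu : z ≠ u := (Finset.mem_erase.mp (Finset.mem_of_mem_erase hz)).1
    have hzK : z ∈ K' := Finset.mem_of_mem_erase (Finset.mem_of_mem_erase hz)
    constructor
    · intro h; exact hzu (part_injOn hpart hKcl.1 hzK hu h)
    · intro h; exact hzv (part_injOn hpart hKcl.1 hzK hv h)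
  -- image map lands in cliques
  have himg : ∀ p ∈ Ze.sigma prs,
      (insert p.2.1 (insert p.2.2 ((p.1.erase u).erase v))) ∈ G.cliqueFinset r := by
    rintro ⟨K', x, y⟩ hp
    rw [Finset.mem_sigma] at hp
    obtain ⟨hK', hxy⟩ := hp
    obtain ⟨hKcl, hu, hv⟩ := hmem K' hK'
    rw [hprsdef, Finset.mem_filter, Finset.mem_product] at hxy
    obtain ⟨⟨hxVi, hyVj⟩, hadjxy, hadj⟩ := hxy
    rw [hVidef, Finset.mem_filter] at hxVi
    rw [hVjdef, Finset.mem_filter] at hyVj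
    have hPx : P x = P u := hxVi.2
    have hPy : P y = P v := hyVj.2
    have hyF : y ∉ (K'.erase u).erase v := fun h => (hFpart K' hK' y h).2 hPy
    have hxF : x ∉ (K'.erase u).erase v := fun h => (hFpart K' hK' x h).1 hPx
    have hxney : x ≠ y := fun h => hij (by rw [← hPx, h, hPy])
    have hxiF : x ∉ insert y ((K'.erase u).erase v) := by
      rw [Finset.mem_insert]; rintro (h | h); exact hxney h; exact hxF h
    have hclF : G.IsClique (((K'.erase u).erase v : Finset V) : Set V) :=
      hKcl.1.subset (Finset.coe_subset.mpr
        (le_trans (Finset.erase_subset _ _) (Finset.erase_subset _ _)))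
    have hclyF : G.IsClique ((insert y ((K'.erase u).erase v) : Finset V) : Set V) := by
      rw [Finset.coe_insert]
      exact hclF.insert fun b hb _ => (hadj b hb).2
    have hcl : G.IsClique ((insert x (insert y ((K'.erase u).erase v)) : Finset V) : Set V) := by
      rw [Finset.coe_insert]
      apply hclyF.insert
      intro b hb _
      rw [Finset.mem_coe, Finset.mem_insert] at hb
      rcases hb with h | h
      · rw [h]; exact hadjxy
      · exact (hadj b h).1
    rw [SimpleGraph.mem_cliqueFinset_iff]
    refine ⟨hcl, ?_⟩
    rw [Finset.card_insert_of_notMem hxiF, Finset.card_insert_of_notMem hyF,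
      hFcard K' hK']
    omega
  have key : (Ze.sigma prs).card ≤ (G.cliqueFinset r).card := by
    apply Finset.card_le_card_of_injOn
      (fun p => insert p.2.1 (insert p.2.2 ((p.1.erase u).erase v))) (fun p hp => himg p hp)
    rintro ⟨K₁, x₁, y₁⟩ h₁ ⟨K₂, x₂, y₂⟩ h₂ heq
    simp only [Finset.mem_coe] at h₁ h₂
    have h₁' := h₁; have h₂' := h₂
    rw [Finset.mem_sigma] at h₁' h₂'
    obtain ⟨hK₁, hxy₁⟩ := h₁'
    obtain ⟨hK₂, hxy₂⟩ := h₂'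
    obtain ⟨hKcl₁, hu₁, hv₁⟩ := hmem K₁ hK₁
    obtain ⟨hKcl₂, hu₂, hv₂⟩ := hmem K₂ hK₂
    rw [hprsdef, Finset.mem_filter, Finset.mem_product] at hxy₁ hxy₂
    obtain ⟨⟨hxVi₁, hyVj₁⟩, -, -⟩ := hxy₁
    obtain ⟨⟨hxVi₂, hyVj₂⟩, -, -⟩ := hxy₂
    rw [hVidef, Finset.mem_filter] at hxVi₁ hxVi₂
    rw [hVjdef, Finset.mem_filter] at hyVj₁ hyVj₂
    have hPx₁ : P x₁ = P u := hxVi₁.2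
    have hPx₂ : P x₂ = P u := hxVi₂.2
    have hPy₁ : P y₁ = P v := hyVj₁.2
    have hPy₂ : P y₂ = P v := hyVj₂.2
    have hyF₁ : y₁ ∉ (K₁.erase u).erase v := fun h => (hFpart K₁ hK₁ y₁ h).2 hPy₁
    have hyF₂ : y₂ ∉ (K₂.erase u).erase v := fun h => (hFpart K₂ hK₂ y₂ h).2 hPy₂
    have hxF₁ : x₁ ∉ insert y₁ ((K₁.erase u).erase v) := by
      rw [Finset.mem_insert]
      rintro (h | h)
      · exact hij (by rw [← hPx₁, h, hPy₁])
      · exact (hFpart K₁ hK₁ x₁ h).1 hPx₁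
    have hxF₂ : x₂ ∉ insert y₂ ((K₂.erase u).erase v) := by
      rw [Finset.mem_insert]
      rintro (h | h)
      · exact hij (by rw [← hPx₂, h, hPy₂])
      · exact (hFpart K₂ hK₂ x₂ h).1 hPx₂
    simp only at heq
    have hKmem := himg ⟨K₁, x₁, y₁⟩ h₁
    rw [SimpleGraph.mem_cliqueFinset_iff] at hKmem
    set KK := insert x₁ (insert y₁ ((K₁.erase u).erase v)) with hKKdef
    have hx₂K : x₂ ∈ KK := by rw [heq]; exact Finset.mem_insert_self _ _
    have hx₁K : x₁ ∈ KK := Finset.mem_insert_self _ _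
    have hxx : x₁ = x₂ :=
      part_injOn hpart hKmem.1 hx₁K hx₂K (by rw [hPx₁, hPx₂])
    subst hxx
    have hy₁K : y₁ ∈ KK := by
      rw [hKKdef]; exact Finset.mem_insert_of_mem (Finset.mem_insert_self _ _)
    have hy₂K : y₂ ∈ KK := by
      rw [heq]; exact Finset.mem_insert_of_mem (Finset.mem_insert_self _ _)
    have hyy : y₁ = y₂ :=
      part_injOn hpart hKmem.1 hy₁K hy₂K (by rw [hPy₁, hPy₂])
    subst hyy
    have hEe : (K₁.erase u).erase v = (K₂.erase u).erase v := by
      have h1 := congrArg (fun s => Finset.erase s x₁) heq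
      simp only [hKKdef, Finset.erase_insert hxF₁, Finset.erase_insert hxF₂] at h1
      have h2 := congrArg (fun s => Finset.erase s y₁) h1
      simpa [Finset.erase_insert hyF₁, Finset.erase_insert hyF₂] using h2
    have hKK12 : K₁ = K₂ := by
      rw [← Finset.insert_erase hu₁, ← Finset.insert_erase (hvKe K₁ hv₁),
        ← Finset.insert_erase hu₂, ← Finset.insert_erase (hvKe K₂ hv₂), hEe]
    subst hKK12
    rfl
  rw [Finset.card_sigma] at key
  -- lower bound on each fiber
  have hVic : Vi.card = n := hsize (P u)
  have hVjc : Vj.card = n := hsize (P v)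
  have hlow : ∀ K' ∈ Ze, (1 - 2 * (r : ℝ) * δ) * (n : ℝ) ^ 2 ≤ ((prs K').card : ℝ) := by
    intro K' hK'
    obtain ⟨hKcl, hu, hv⟩ := hmem K' hK'
    set F := (K'.erase u).erase v with hFdef
    have hsplit := Finset.card_filter_add_card_filter_not
        (s := Vi ×ˢ Vj)
        (p := fun p : V × V => G.Adj p.1 p.2 ∧ ∀ z ∈ F, G.Adj p.1 z ∧ G.Adj p.2 z)
    have hQcard : (Vi ×ˢ Vj).card = n * n := by
      rw [Finset.card_product, hVic, hVjc]
    -- bad pairs bound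
    set B1 := (Vi.filter fun x => ¬ ∀ z ∈ F, G.Adj x z) ×ˢ Vj with hB1def
    set B2 := Vi ×ˢ (Vj.filter fun y => ¬ ∀ z ∈ F, G.Adj y z) with hB2def
    set B3 := Vi.biUnion (fun x => ({x} : Finset V) ×ˢ (Vj.filter fun y => ¬ G.Adj x y))
      with hB3def
    have hsub : ((Vi ×ˢ Vj).filter fun p : V × V =>
        ¬ (G.Adj p.1 p.2 ∧ ∀ z ∈ F, G.Adj p.1 z ∧ G.Adj p.2 z)) ⊆ B1 ∪ B2 ∪ B3 := by
      rintro ⟨x, y⟩ hp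
      rw [Finset.mem_filter, Finset.mem_product] at hp
      obtain ⟨⟨hxVi, hyVj⟩, hbad⟩ := hp
      rw [not_and_or] at hbad
      rcases hbad with hbad | hbad
      · apply Finset.mem_union_right
        rw [hB3def, Finset.mem_biUnion]
        refine ⟨x, hxVi, ?_⟩
        rw [Finset.mem_product]
        exact ⟨Finset.mem_singleton_self x, Finset.mem_filter.mpr ⟨hyVj, hbad⟩⟩
      · push_neg at hbad
        obtain ⟨z, hz, hzbad⟩ := hbad
        by_cases hxz : G.Adj x z
        · apply Finset.mem_union_left; apply Finset.mem_union_right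
          rw [hB2def, Finset.mem_product]
          refine ⟨hxVi, Finset.mem_filter.mpr ⟨hyVj, ?_⟩⟩
          push_neg; exact ⟨z, hz, hzbad hxz⟩
        · apply Finset.mem_union_left; apply Finset.mem_union_left
          rw [hB1def, Finset.mem_product]
          refine ⟨Finset.mem_filter.mpr ⟨hxVi, ?_⟩, hyVj⟩
          push_neg; exact ⟨z, hz, hxz⟩
    -- bound on bad x's (and y's)
    have hbadside : ∀ (t : Fin r), t = P u ∨ t = P v →
        ((((Finset.univ.filter fun x => P x = t).filter
            fun x => ¬ ∀ z ∈ F, G.Adj x z).card : ℝ)) ≤ ((r : ℝ) - 1) * δ * n := by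
      intro t ht
      have hsubt : ((Finset.univ.filter fun x => P x = t).filter
          fun x => ¬ ∀ z ∈ F, G.Adj x z)
          ⊆ F.biUnion fun z => Finset.univ.filter fun x => P x = t ∧ ¬ G.Adj z x := by
        intro x hx
        rw [Finset.filter_filter, Finset.mem_filter] at hx
        obtain ⟨-, hPx, hbadx⟩ := hx
        push_neg at hbadx
        obtain ⟨z, hz, hnadj⟩ := hbadx
        rw [Finset.mem_biUnion]
        refine ⟨z, hz, ?_⟩
        rw [Finset.mem_filter]
        exact ⟨Finset.mem_univ x, hPx, fun h => hnadj h.symm⟩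
      have h1 : ((((Finset.univ.filter fun x => P x = t).filter
          fun x => ¬ ∀ z ∈ F, G.Adj x z).card : ℝ))
          ≤ ∑ z ∈ F, ((Finset.univ.filter fun x => P x = t ∧ ¬ G.Adj z x).card : ℝ) := by
        have := le_trans (Finset.card_le_card hsubt) Finset.card_biUnion_le
        exact_mod_cast this
      have h2 : ∑ z ∈ F, ((Finset.univ.filter fun x => P x = t ∧ ¬ G.Adj z x).card : ℝ)
          ≤ ∑ _z ∈ F, δ * n := by
        apply Finset.sum_le_sum
        intro z hz
        have hPz : P z ≠ t := by
          rcases ht with h | h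
          · rw [h]; exact (hFpart K' hK' z hz).1
          · rw [h]; exact (hFpart K' hK' z hz).2
        exact nonnbr_bound δ hsize hdeg z t hPz
      have h3 : ∑ _z ∈ F, δ * n ≤ ((r : ℝ) - 1) * δ * n := by
        rw [Finset.sum_const, hFdef, hFcard K' hK', nsmul_eq_mul]
        have hc : ((r - 2 : ℕ) : ℝ) ≤ (r : ℝ) - 1 := by
          rw [Nat.cast_sub (by omega : 2 ≤ r)]
          push_cast
          linarith
        nlinarith [mul_nonneg hδ0 (Nat.cast_nonneg (α := ℝ) n)]
      linarith
    have hB1c : ((B1.card : ℝ)) ≤ ((r : ℝ) - 1) * δ * n * n := by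
      rw [hB1def, Finset.card_product, hVjc]
      push_cast
      have := hbadside (P u) (Or.inl rfl)
      rw [hVidef] at *
      nlinarith [Nat.cast_nonneg (α := ℝ) n, this]
    have hB2c : ((B2.card : ℝ)) ≤ ((r : ℝ) - 1) * δ * n * n := by
      rw [hB2def, Finset.card_product, hVic]
      push_cast
      have := hbadside (P v) (Or.inr rfl)
      rw [hVjdef] at *
      nlinarith [Nat.cast_nonneg (α := ℝ) n, this]
    have hB3c : ((B3.card : ℝ)) ≤ δ * n * n := by
      have h1 : (B3.card : ℝ) ≤ ∑ x ∈ Vi,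
          (((({x} : Finset V) ×ˢ (Vj.filter fun y => ¬ G.Adj x y)).card : ℝ)) := by
        exact_mod_cast Finset.card_biUnion_le
      have h2 : ∀ x ∈ Vi, (((({x} : Finset V) ×ˢ (Vj.filter fun y => ¬ G.Adj x y)).card : ℝ))
          ≤ δ * n := by
        intro x hx
        rw [Finset.card_product, Finset.card_singleton, one_mul]
        rw [hVidef, Finset.mem_filter] at hx
        have hPx : P x ≠ P v := by rw [hx.2]; exact hij
        have heqf : Vj.filter (fun y => ¬ G.Adj x y)
            = Finset.univ.filter fun y => P y = P v ∧ ¬ G.Adj x y := by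
          rw [hVjdef, Finset.filter_filter]
        rw [heqf]
        exact nonnbr_bound δ hsize hdeg x (P v) hPx
      have h3 : ∑ x ∈ Vi, ((δ : ℝ) * n) = (n : ℝ) * (δ * n) := by
        rw [Finset.sum_const, hVic, nsmul_eq_mul]
      calc (B3.card : ℝ) ≤ _ := h1
        _ ≤ ∑ _x ∈ Vi, (δ : ℝ) * n := Finset.sum_le_sum h2
        _ = (n : ℝ) * (δ * n) := h3
        _ = δ * n * n := by ring
    -- assemble
    have hbadc : ((((Vi ×ˢ Vj).filter fun p : V × V =>
        ¬ (G.Adj p.1 p.2 ∧ ∀ z ∈ F, G.Adj p.1 z ∧ G.Adj p.2 z)).card : ℝ))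
        ≤ 2 * (r : ℝ) * δ * (n : ℝ) ^ 2 := by
      have h1 := Finset.card_le_card hsub
      have h2 := Finset.card_union_le (B1 ∪ B2) B3
      have h3 := Finset.card_union_le B1 B2
      have hδn : 0 ≤ δ * n * n := by positivity
      have hr1 : (1 : ℝ) ≤ (r : ℝ) := by exact_mod_cast Nat.one_le_cast.mpr (by omega)
      have : ((((Vi ×ˢ Vj).filter fun p : V × V =>
          ¬ (G.Adj p.1 p.2 ∧ ∀ z ∈ F, G.Adj p.1 z ∧ G.Adj p.2 z)).card : ℝ))
          ≤ (B1.card : ℝ) + B2.card + B3.card := by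
        have := le_trans h1 (le_trans h2 (by omega : (B1 ∪ B2).card + B3.card ≤ B1.card + B2.card + B3.card))
        exact_mod_cast this
      nlinarith [hB1c, hB2c, hB3c, mul_nonneg hδ0 (sq_nonneg (n : ℝ))]
    have hcnt := congrArg (Nat.cast : ℕ → ℝ) hsplit
    rw [hQcard] at hcnt
    push_cast at hcnt
    have : ((prs K').card : ℝ) = (((Vi ×ˢ Vj).filter fun p : V × V =>
        G.Adj p.1 p.2 ∧ ∀ z ∈ F, G.Adj p.1 z ∧ G.Adj p.2 z).card : ℝ) := by
      rw [hprsdef, hFdef]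
    rw [this]
    nlinarith [hcnt, hbadc]
  -- combine
  have hsum : ((Ze.card : ℝ)) * ((1 - 2 * (r : ℝ) * δ) * (n : ℝ) ^ 2)
      ≤ ∑ K' ∈ Ze, ((prs K').card : ℝ) := by
    calc ((Ze.card : ℝ)) * ((1 - 2 * (r : ℝ) * δ) * (n : ℝ) ^ 2)
        = ∑ _K' ∈ Ze, (1 - 2 * (r : ℝ) * δ) * (n : ℝ) ^ 2 := by
          rw [Finset.sum_const, nsmul_eq_mul]
      _ ≤ _ := Finset.sum_le_sum hlow
  have hkey : ∑ K' ∈ Ze, ((prs K').card : ℝ) ≤ ((G.cliqueFinset r).card : ℝ) := by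
    exact_mod_cast key
  linarith

private lemma edge_lower (hr : 3 ≤ r) (δ : ℝ) (hδ0 : 0 ≤ δ) (hn : 1 ≤ n)
    (hrδ : (r : ℝ) * δ ≤ 1 / 8)
    (hpart : ∀ u v, G.Adj u v → P u ≠ P v)
    (hsize : ∀ i : Fin r, (Finset.univ.filter fun v => P v = i).card = n)
    (hdeg : ∀ (j : Fin r) (v : V), P v ≠ j →
      (1 - δ) * n ≤ ((Finset.univ.filter fun u => P u = j ∧ G.Adj v u).card : ℝ))
    (hvb : ∀ w : V, (((G.cliqueFinset r).filter fun K => w ∈ K).card : ℝ)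
      * ((1 - r * δ) * n) ≤ ((G.cliqueFinset r).card : ℝ))
    (u v : V) (huv : G.Adj u v) :
    ((G.cliqueFinset r).card : ℝ) ≤
      (((G.cliqueFinset r).filter fun K => u ∈ K ∧ v ∈ K).card : ℝ) * (n : ℝ) ^ 2
        + (16 / 7) * r * δ * ((G.cliqueFinset r).card : ℝ) := by
  classical
  have hij : P u ≠ P v := hpart u v huv
  have hune : u ≠ v := huv.ne
  have hn0 : (0 : ℝ) < n := by exact_mod_cast hn
  set Ze := (G.cliqueFinset r).filter fun K => u ∈ K ∧ v ∈ K with hZedef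
  set Vi := Finset.univ.filter fun x => P x = P u with hVidef
  set Vj := Finset.univ.filter fun x => P x = P v with hVjdef
  have hVic : Vi.card = n := hsize (P u)
  have hVjc : Vj.card = n := hsize (P v)
  set gd := (G.cliqueFinset r).filter fun K =>
    ∀ x ∈ K, P x ≠ P u → P x ≠ P v → G.Adj u x ∧ G.Adj v x with hgddef
  set bd := (G.cliqueFinset r).filter fun K =>
    ¬ ∀ x ∈ K, P x ≠ P u → P x ≠ P v → G.Adj u x ∧ G.Adj v x with hbddef
  have hsplit : gd.card + bd.card = (G.cliqueFinset r).card :=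
    Finset.card_filter_add_card_filter_not _
  -- structure of cliques in gd
  set f : Finset V → Finset V := fun K =>
    insert u (insert v (K.filter fun z => P z ≠ P u ∧ P z ≠ P v)) with hfdef
  have hstruct : ∀ K ∈ G.cliqueFinset r, ∃ x y : V, P x = P u ∧ P y = P v ∧
      x ∈ K ∧ y ∈ K ∧
      (K.filter fun z => P z ≠ P u ∧ P z ≠ P v) = (K.erase x).erase y ∧
      K = insert x (insert y (K.filter fun z => P z ≠ P u ∧ P z ≠ P v)) := by
    intro K hK
    rw [SimpleGraph.mem_cliqueFinset_iff] at hK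
    obtain ⟨x, hxK, hPx⟩ := exists_rep hpart hK (P u)
    obtain ⟨y, hyK, hPy⟩ := exists_rep hpart hK (P v)
    have hxy : x ≠ y := fun h => hij (by rw [← hPx, h, hPy])
    have hinj := part_injOn hpart hK.1
    have hFeq : (K.filter fun z => P z ≠ P u ∧ P z ≠ P v) = (K.erase x).erase y := by
      ext z
      simp only [Finset.mem_filter, Finset.mem_erase]
      constructor
      · rintro ⟨hzK, hzu, hzv⟩
        refine ⟨fun h => hzv (by rw [h, hPy]), fun h => hzu (by rw [h, hPx]), hzK⟩
      · rintro ⟨hzy, hzx, hzK⟩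
        refine ⟨hzK, fun h => hzx (hinj hzK hxK (by rw [h, hPx])),
          fun h => hzy (hinj hzK hyK (by rw [h, hPy]))⟩
    refine ⟨x, y, hPx, hPy, hxK, hyK, hFeq, ?_⟩
    rw [hFeq, Finset.insert_erase (Finset.mem_erase.mpr ⟨hxy.symm, hyK⟩),
      Finset.insert_erase hxK]
  have hvF : ∀ K : Finset V, v ∉ K.filter fun z => P z ≠ P u ∧ P z ≠ P v := by
    intro K h
    exact (Finset.mem_filter.mp h).2.2 rfl
  have huF : ∀ K : Finset V, u ∉ insert v (K.filter fun z => P z ≠ P u ∧ P z ≠ P v) := by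
    intro K h
    rw [Finset.mem_insert] at h
    rcases h with h | h
    · exact hune h
    · exact (Finset.mem_filter.mp h).2.1 rfl
  -- maps to
  have hmaps : ∀ K ∈ gd, f K ∈ Ze := by
    intro K hKgd
    rw [hgddef, Finset.mem_filter] at hKgd
    obtain ⟨hKmem, hgood⟩ := hKgd
    have hKcl : G.IsNClique r K := SimpleGraph.mem_cliqueFinset_iff.mp hKmem
    set F := K.filter fun z => P z ≠ P u ∧ P z ≠ P v with hFdef
    have hadjF : ∀ z ∈ F, G.Adj u z ∧ G.Adj v z := by
      intro z hz
      rw [hFdef, Finset.mem_filter] at hz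
      exact hgood z hz.1 hz.2.1 hz.2.2
    have hclF : G.IsClique (F : Set V) :=
      hKcl.1.subset (Finset.coe_subset.mpr (Finset.filter_subset _ _))
    have hclvF : G.IsClique ((insert v F : Finset V) : Set V) := by
      rw [Finset.coe_insert]
      exact hclF.insert fun b hb _ => (hadjF b hb).2
    have hcl : G.IsClique ((f K : Finset V) : Set V) := by
      rw [hfdef]
      simp only
      rw [Finset.coe_insert]
      apply hclvF.insert
      intro b hb _
      rw [Finset.mem_coe, Finset.mem_insert] at hb
      rcases hb with h | h
      · rw [h]; exact huv
      · exact (hadjF b h).1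
    obtain ⟨x, y, hPx, hPy, hxK, hyK, hFeq, -⟩ := hstruct K hKmem
    have hxy : x ≠ y := fun h => hij (by rw [← hPx, h, hPy])
    have hFcard : F.card = r - 2 := by
      rw [hFdef, hFeq, Finset.card_erase_of_mem (Finset.mem_erase.mpr ⟨hxy.symm, hyK⟩),
        Finset.card_erase_of_mem hxK, hKcl.2]
      omega
    have hcard : (f K).card = r := by
      rw [hfdef]
      simp only
      rw [Finset.card_insert_of_notMem (huF K), Finset.card_insert_of_notMem (hvF K)]
      rw [hFdef] at hFcard
      omega
    rw [hZedef, Finset.mem_filter]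
    refine ⟨SimpleGraph.mem_cliqueFinset_iff.mpr ⟨hcl, hcard⟩,
      Finset.mem_insert_self _ _, Finset.mem_insert_of_mem (Finset.mem_insert_self _ _)⟩
  -- fibers
  have hfib : ∀ K' ∈ Ze, (gd.filter fun K => f K = K').card ≤ n * n := by
    intro K' _
    have hsubfib : (gd.filter fun K => f K = K') ⊆
        (Vi ×ˢ Vj).image fun p : V × V =>
          insert p.1 (insert p.2 ((K'.erase u).erase v)) := by
      intro K hKf
      rw [Finset.mem_filter] at hKf
      obtain ⟨hKgd, hfK⟩ := hKf
      rw [hgddef, Finset.mem_filter] at hKgd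
      obtain ⟨hKmem, -⟩ := hKgd
      obtain ⟨x, y, hPx, hPy, hxK, hyK, hFeq, hKdec⟩ := hstruct K hKmem
      have hF' : (K.filter fun z => P z ≠ P u ∧ P z ≠ P v) = (K'.erase u).erase v := by
        rw [← hfK, hfdef]
        simp only
        rw [Finset.erase_insert (huF K), Finset.erase_insert (hvF K)]
      rw [Finset.mem_image]
      refine ⟨(x, y), ?_, ?_⟩
      · rw [Finset.mem_product, hVidef, hVjdef]
        exact ⟨Finset.mem_filter.mpr ⟨Finset.mem_univ x, hPx⟩,
          Finset.mem_filter.mpr ⟨Finset.mem_univ y, hPy⟩⟩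
      · rw [← hF', ← hKdec]
    calc (gd.filter fun K => f K = K').card
        ≤ ((Vi ×ˢ Vj).image fun p : V × V =>
            insert p.1 (insert p.2 ((K'.erase u).erase v))).card :=
          Finset.card_le_card hsubfib
      _ ≤ (Vi ×ˢ Vj).card := Finset.card_image_le
      _ = n * n := by rw [Finset.card_product, hVic, hVjc]
  have hgd : gd.card ≤ (n * n) * Ze.card :=
    Finset.card_le_mul_card_image_of_maps_to hmaps (n * n) hfib
  -- bad part
  set W := Finset.univ.filter fun w =>
    (¬ G.Adj u w ∨ ¬ G.Adj v w) ∧ P w ≠ P u ∧ P w ≠ P v with hWdef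
  have hbdsub : bd ⊆ W.biUnion fun w => (G.cliqueFinset r).filter fun K => w ∈ K := by
    intro K hK
    rw [hbddef, Finset.mem_filter] at hK
    obtain ⟨hKmem, hbad⟩ := hK
    push_neg at hbad
    obtain ⟨x, hxK, hxu, hxv, hnadj⟩ := hbad
    rw [Finset.mem_biUnion]
    refine ⟨x, ?_, Finset.mem_filter.mpr ⟨hKmem, hxK⟩⟩
    rw [hWdef, Finset.mem_filter]
    refine ⟨Finset.mem_univ x, ?_, hxu, hxv⟩
    by_cases h : G.Adj u x
    · exact Or.inr (hnadj h)
    · exact Or.inl h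
  have hbd1 : (bd.card : ℝ) ≤
      ∑ w ∈ W, (((G.cliqueFinset r).filter fun K => w ∈ K).card : ℝ) := by
    have := le_trans (Finset.card_le_card hbdsub) Finset.card_biUnion_le
    exact_mod_cast this
  have hk0 : (0 : ℝ) ≤ ((G.cliqueFinset r).card : ℝ) := Nat.cast_nonneg _
  have hzw : ∀ w : V, (((G.cliqueFinset r).filter fun K => w ∈ K).card : ℝ) * ((7 / 8) * n)
      ≤ ((G.cliqueFinset r).card : ℝ) := by
    intro w
    have h1 := hvb w
    have h2 : (7 / 8 : ℝ) * n ≤ (1 - r * δ) * n := by nlinarith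
    have h3 : (0 : ℝ) ≤ (((G.cliqueFinset r).filter fun K => w ∈ K).card : ℝ) :=
      Nat.cast_nonneg _
    nlinarith
  have hW : (W.card : ℝ) ≤ (r : ℝ) * (2 * δ * n) := by
    have hfib2 := Finset.card_eq_sum_card_fiberwise
      (f := P) (s := W) (t := (Finset.univ : Finset (Fin r))) (fun x _ => Finset.mem_univ _)
    have hterm : ∀ t ∈ (Finset.univ : Finset (Fin r)),
        ((W.filter fun w => P w = t).card : ℝ) ≤ 2 * δ * n := by
      intro t _
      by_cases htu : t = P u
      · have : (W.filter fun w => P w = t) = ∅ := by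
          rw [Finset.eq_empty_iff_forall_notMem]
          intro w hw
          rw [Finset.mem_filter, hWdef, Finset.mem_filter] at hw
          exact hw.1.2.2.1 (by rw [hw.2, htu])
        rw [this]
        simp
        positivity
      by_cases htv : t = P v
      · have : (W.filter fun w => P w = t) = ∅ := by
          rw [Finset.eq_empty_iff_forall_notMem]
          intro w hw
          rw [Finset.mem_filter, hWdef, Finset.mem_filter] at hw
          exact hw.1.2.2.2 (by rw [hw.2, htv])
        rw [this]
        simp
        positivity
      · have hsub2 : (W.filter fun w => P w = t) ⊆
            (Finset.univ.filter fun x => P x = t ∧ ¬ G.Adj u x)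
              ∪ (Finset.univ.filter fun x => P x = t ∧ ¬ G.Adj v x) := by
          intro w hw
          rw [Finset.mem_filter, hWdef, Finset.mem_filter] at hw
          obtain ⟨⟨-, hor, -, -⟩, hPt⟩ := hw
          rw [Finset.mem_union]
          rcases hor with h | h
          · exact Or.inl (Finset.mem_filter.mpr ⟨Finset.mem_univ w, hPt, h⟩)
          · exact Or.inr (Finset.mem_filter.mpr ⟨Finset.mem_univ w, hPt, h⟩)
        have h1 : ((W.filter fun w => P w = t).card : ℝ) ≤
            ((Finset.univ.filter fun x => P x = t ∧ ¬ G.Adj u x).card : ℝ)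
              + ((Finset.univ.filter fun x => P x = t ∧ ¬ G.Adj v x).card : ℝ) := by
          have := le_trans (Finset.card_le_card hsub2) (Finset.card_union_le _ _)
          exact_mod_cast this
        have h2 := nonnbr_bound δ hsize hdeg u t (fun h => htu h.symm)
        have h3 := nonnbr_bound δ hsize hdeg v t (fun h => htv h.symm)
        linarith
    have hWsum : (W.card : ℝ) = ∑ t ∈ (Finset.univ : Finset (Fin r)),
        ((W.filter fun w => P w = t).card : ℝ) := by
      exact_mod_cast hfib2
    rw [hWsum]
    calc ∑ t ∈ (Finset.univ : Finset (Fin r)), ((W.filter fun w => P w = t).card : ℝ)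
        ≤ ∑ _t ∈ (Finset.univ : Finset (Fin r)), 2 * δ * n := Finset.sum_le_sum hterm
      _ = (r : ℝ) * (2 * δ * n) := by
          rw [Finset.sum_const, Finset.card_univ, Fintype.card_fin, nsmul_eq_mul]
  -- combine bad bound
  have hbdfinal : (bd.card : ℝ) ≤ (16 / 7) * r * δ * ((G.cliqueFinset r).card : ℝ) := by
    have hs1 : (bd.card : ℝ) * ((7 / 8) * n) ≤
        ∑ w ∈ W, (((G.cliqueFinset r).filter fun K => w ∈ K).card : ℝ) * ((7 / 8) * n) := by
      rw [← Finset.sum_mul]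
      apply mul_le_mul_of_nonneg_right hbd1
      positivity
    have hs2 : ∑ w ∈ W, (((G.cliqueFinset r).filter fun K => w ∈ K).card : ℝ) * ((7 / 8) * n)
        ≤ ∑ _w ∈ W, ((G.cliqueFinset r).card : ℝ) := Finset.sum_le_sum fun w _ => hzw w
    have hs3 : ∑ _w ∈ W, ((G.cliqueFinset r).card : ℝ)
        = (W.card : ℝ) * ((G.cliqueFinset r).card : ℝ) := by
      rw [Finset.sum_const, nsmul_eq_mul]
    have hs4 : (W.card : ℝ) * ((G.cliqueFinset r).card : ℝ)
        ≤ ((r : ℝ) * (2 * δ * n)) * ((G.cliqueFinset r).card : ℝ) :=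
      mul_le_mul_of_nonneg_right hW hk0
    have hs5 : (bd.card : ℝ) * ((7 / 8) * n) ≤
        ((16 / 7) * r * δ * ((G.cliqueFinset r).card : ℝ)) * ((7 / 8) * n) := by
      have heq : ((16 / 7 : ℝ) * r * δ * ((G.cliqueFinset r).card : ℝ)) * ((7 / 8) * n)
          = ((r : ℝ) * (2 * δ * n)) * ((G.cliqueFinset r).card : ℝ) := by ring
      rw [heq]
      linarith
    have hpos : (0 : ℝ) < (7 / 8) * n := by positivity
    exact le_of_mul_le_mul_right hs5 hpos
  -- conclude
  have hgdr : (gd.card : ℝ) ≤ (Ze.card : ℝ) * (n : ℝ) ^ 2 := by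
    have : ((gd.card : ℕ) : ℝ) ≤ (((n * n) * Ze.card : ℕ) : ℝ) := by exact_mod_cast hgd
    push_cast at this
    nlinarith [this]
  have hks : ((gd.card : ℝ)) + (bd.card : ℝ) = ((G.cliqueFinset r).card : ℝ) := by
    exact_mod_cast hsplit
  linarith

end aux

/-- for every edge e, |z_e − k/n²| ≤ 9δr·k/n². -/
theorem stmt_2 {V : Type*} [Fintype V] [DecidableEq V] {r n : ℕ} (hr : 3 ≤ r)
    (δ : ℝ) (hδ0 : 0 ≤ δ) (hδ1 : δ ≤ 1 / (8 * r))
    (G : SimpleGraph V) (P : V → Fin r)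
    (hpart : ∀ u v, G.Adj u v → P u ≠ P v)
    (hsize : ∀ i : Fin r, (Finset.univ.filter fun v => P v = i).card = n)
    (hdeg : ∀ (j : Fin r) (v : V), P v ≠ j →
      (1 - δ) * n ≤ ((Finset.univ.filter fun u => P u = j ∧ G.Adj v u).card : ℝ)) :
    ∀ e ∈ G.edgeFinset,
      |((((G.cliqueFinset r).filter fun K => ∀ x ∈ e, x ∈ K).card : ℝ)
          - ((G.cliqueFinset r).card : ℝ) / n ^ 2)|
        ≤ 9 * δ * r * ((G.cliqueFinset r).card : ℝ) / n ^ 2 := by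
  classical
  intro e
  induction e using Sym2.ind with
  | _ u v =>
  intro he
  rw [SimpleGraph.mem_edgeFinset, SimpleGraph.mem_edgeSet] at he
  have hfilt : ((G.cliqueFinset r).filter fun K => ∀ x ∈ (s(u, v) : Sym2 V), x ∈ K)
      = (G.cliqueFinset r).filter fun K => u ∈ K ∧ v ∈ K := by
    apply Finset.filter_congr
    intro K _
    simp [Sym2.mem_iff]
  rw [hfilt]
  have hn : 1 ≤ n := by
    rw [← hsize (P u)]
    exact Finset.card_pos.mpr ⟨u, Finset.mem_filter.mpr ⟨Finset.mem_univ u, rfl⟩⟩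
  have hr0 : (0 : ℝ) < (r : ℝ) := by
    exact_mod_cast (by omega : 0 < r)
  have hrδ : (r : ℝ) * δ ≤ 1 / 8 := by
    have h8 : (r : ℝ) * (1 / (8 * r)) = 1 / 8 := by
      field_simp
    calc (r : ℝ) * δ ≤ (r : ℝ) * (1 / (8 * r)) :=
          mul_le_mul_of_nonneg_left hδ1 hr0.le
      _ = 1 / 8 := h8
  have hA := edge_upper hr δ hδ0 hpart hsize hdeg u v he
  have hvb : ∀ w : V, (((G.cliqueFinset r).filter fun K => w ∈ K).card : ℝ)
      * ((1 - r * δ) * n) ≤ ((G.cliqueFinset r).card : ℝ) :=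
    fun w => vertex_bound hr δ hδ0 hpart hsize hdeg w
  have hB := edge_lower hr δ hδ0 hn hrδ hpart hsize hdeg hvb u v he
  set Z := ((((G.cliqueFinset r).filter fun K => u ∈ K ∧ v ∈ K).card : ℕ) : ℝ) with hZdef
  set Kc := (((G.cliqueFinset r).card : ℕ) : ℝ) with hKcdef
  set N := ((n : ℕ) : ℝ) with hNdef
  have hN1 : (1 : ℝ) ≤ N := by rw [hNdef]; exact_mod_cast hn
  have hN2 : (0 : ℝ) < N ^ 2 := by positivity
  have hKc0 : (0 : ℝ) ≤ Kc := Nat.cast_nonneg _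
  have hZ0 : (0 : ℝ) ≤ Z := Nat.cast_nonneg _
  rw [le_div_iff₀ hN2]
  have habs : |Z - Kc / N ^ 2| * N ^ 2 = |Z * N ^ 2 - Kc| := by
    have h1 : Z * N ^ 2 - Kc = (Z - Kc / N ^ 2) * N ^ 2 := by
      field_simp
    rw [h1, abs_mul, abs_of_pos hN2]
  rw [habs, abs_le]
  have hprod : (0 : ℝ) ≤ (r : ℝ) * δ * Kc :=
    mul_nonneg (mul_nonneg hr0.le hδ0) hKc0
  constructor
  · nlinarith [hB, hprod]
  · have h2 : Z * N ^ 2 - 2 * ((r : ℝ) * δ) * (Z * N ^ 2) ≤ Kc := by nlinarith [hA]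
    have hZN : (0 : ℝ) ≤ Z * N ^ 2 := by positivity
    have h3 : Z * N ^ 2 ≤ (4 / 3) * Kc := by
      nlinarith [h2, mul_nonneg hZN (show (0 : ℝ) ≤ 1 / 4 - 2 * ((r : ℝ) * δ) by linarith)]
    have h4 : 2 * ((r : ℝ) * δ) * (Z * N ^ 2) ≤ 2 * ((r : ℝ) * δ) * ((4 / 3) * Kc) :=
      mul_le_mul_of_nonneg_left h3
        (by nlinarith [mul_nonneg hr0.le hδ0])
    nlinarith [h2, h4, hprod]
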